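/- Let R = {ab → a} and S = {c → bc} over {a,b,c}. Then R/S is not terminating (there is a loop abc →_R ac →_S abc), yet every string in RFC(R ∪ S) = a ∪ b⁺c contains no factor ab, so R/S is terminating on RFC(R ∪ S). Hence relative termination is not in general reducible to termination on right-hand sides of forward closures. -/

import Mathlib

inductive ABC where
  | a : ABC
  | b : ABC
  | c : ABC
deriving DecidableEq

def Step {Γ : Type*} (R : Set (List Γ × List Γ)) (u v : List Γ) : Prop :=
  ∃ (x y l r : List Γ), (l, r) ∈ R ∧ u = x ++ l ++ y ∧ v = x ++ r ++ y

/-- `SN(R/S, L)`: no infinite `(R∪S)`-derivation starting in `L` has infinitely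
many `R`-steps. -/
def SNRelOn {Γ : Type*} (R S : Set (List Γ × List Γ)) (L : Set (List Γ)) : Prop :=
  ¬ ∃ f : ℕ → List Γ, f 0 ∈ L ∧ (∀ n, Step (R ∪ S) (f n) (f (n + 1))) ∧
      (∀ N, ∃ n, N ≤ n ∧ Step R (f n) (f (n + 1)))

/-- `SN(R/S)` on all strings. -/
def SNRel {Γ : Type*} (R S : Set (List Γ × List Γ)) : Prop :=
  SNRelOn R S Set.univ

/-- Right-hand sides of forward closures of `R`. -/
inductive RFC {Γ : Type*} (R : Set (List Γ × List Γ)) : List Γ → Prop where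
  | base {l r : List Γ} : (l, r) ∈ R → RFC R r
  | inner {x y l r : List Γ} : RFC R (x ++ l ++ y) → (l, r) ∈ R → RFC R (x ++ r ++ y)
  | eat {x l₁ l₂ r : List Γ} : RFC R (x ++ l₁) → (l₁ ++ l₂, r) ∈ R →
      l₁ ≠ [] → l₂ ≠ [] → RFC R (x ++ r)

open ABC in
/-- `R = {ab → a}`. -/
def R12 : Set (List ABC × List ABC) := {([a, b], [a])}

open ABC in
/-- `S = {c → bc}`. -/
def S12 : Set (List ABC × List ABC) := {([c], [b, c])}

section Aux
open ABC

/-- The language `a ∪ b⁺c`. -/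
def Lset (w : List ABC) : Prop :=
  w = [ABC.a] ∨ ∃ n : ℕ, 1 ≤ n ∧ w = List.replicate n ABC.b ++ [ABC.c]

lemma notmem_a (n : ℕ) : ABC.a ∉ List.replicate n ABC.b ++ [ABC.c] := by
  simp [List.mem_replicate]

lemma split_c : ∀ (x : List ABC) (n : ℕ) (y : List ABC),
    x ++ ABC.c :: y = List.replicate n ABC.b ++ [ABC.c] →
    x = List.replicate n ABC.b ∧ y = [] := by
  intro x
  induction x with
  | nil =>
    intro n y h
    cases n with
    | zero => simpa using h.symm
    | succ m => simp [List.replicate_succ] at h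
  | cons hd tl ih =>
    intro n y h
    cases n with
    | zero => simp at h
    | succ m =>
      simp only [List.replicate_succ, List.cons_append, List.cons.injEq] at h
      obtain ⟨rfl, h2⟩ := h
      obtain ⟨rfl, rfl⟩ := ih m y h2
      simp [List.replicate_succ]

lemma last_not_a (x : List ABC) (n : ℕ) :
    x ++ [ABC.a] ≠ List.replicate n ABC.b ++ [ABC.c] := by
  intro h
  have := congrArg List.reverse h
  simp at this

lemma rule_cases {l r : List ABC} (h : (l, r) ∈ R12 ∪ S12) :
    (l = [a, b] ∧ r = [a]) ∨ (l = [c] ∧ r = [b, c]) := by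
  rcases h with h | h
  · left; simpa [R12, Prod.ext_iff] using h
  · right; simpa [S12, Prod.ext_iff] using h

lemma L_forward : ∀ w, RFC (R12 ∪ S12) w → Lset w := by
  intro w h
  induction h with
  | @base l r hr =>
    rcases rule_cases hr with ⟨_, rfl⟩ | ⟨_, rfl⟩
    · exact Or.inl rfl
    · exact Or.inr ⟨1, le_refl 1, rfl⟩
  | @inner x y l r h hr ih =>
    rcases rule_cases hr with ⟨rfl, rfl⟩ | ⟨rfl, rfl⟩
    · exfalso
      rcases ih with h1 | ⟨n, hn, h1⟩
      · have := congrArg List.length h1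
        simp at this
        omega
      · have hm : ABC.a ∈ x ++ [ABC.a, ABC.b] ++ y := by simp
        rw [h1] at hm
        exact notmem_a n hm
    · rcases ih with h1 | ⟨n, hn, h1⟩
      · exfalso
        have hm : ABC.c ∈ x ++ [ABC.c] ++ y := by simp
        rw [h1] at hm
        simp at hm
      · have h1' : x ++ ABC.c :: y = List.replicate n ABC.b ++ [ABC.c] := by
          simpa using h1
        obtain ⟨rfl, rfl⟩ := split_c x n y h1'
        exact Or.inr ⟨n + 1, by omega, by simp [List.replicate_succ']⟩
  | @eat x l₁ l₂ r h hr h1ne h2ne ih =>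
    rcases rule_cases hr with ⟨hl, rfl⟩ | ⟨hl, rfl⟩
    · have hl1 : l₁ = [ABC.a] := by
        cases l₁ with
        | nil => exact absurd rfl h1ne
        | cons hd tl =>
          cases tl with
          | nil =>
            simp only [List.cons_append, List.nil_append, List.cons.injEq] at hl
            rw [hl.1]
          | cons hd2 tl2 =>
            exfalso
            simp only [List.cons_append, List.cons.injEq] at hl
            have : tl2 ++ l₂ = [] := hl.2.2
            rcases List.append_eq_nil_iff.mp this with ⟨-, h2⟩
            exact h2ne h2
      rw [hl1] at ih
      exact ih
    · exfalso
      have hlen := congrArg List.length hl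
      have p1 : 0 < l₁.length := List.length_pos_iff.mpr h1ne
      have p2 : 0 < l₂.length := List.length_pos_iff.mpr h2ne
      simp at hlen
      omega

lemma L_b (n : ℕ) : RFC (R12 ∪ S12) (List.replicate (n + 1) ABC.b ++ [ABC.c]) := by
  induction n with
  | zero => exact RFC.base (Or.inr rfl)
  | succ m ih =>
    have h' : RFC (R12 ∪ S12)
        (List.replicate (m + 1) ABC.b ++ [ABC.c] ++ []) := by simpa using ih
    have h2 := RFC.inner h' (Or.inr rfl : ([ABC.c], [ABC.b, ABC.c]) ∈ R12 ∪ S12)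
    have heq : List.replicate (m + 1) ABC.b ++ [ABC.b, ABC.c] ++ []
        = List.replicate (m + 2) ABC.b ++ [ABC.c] := by
      simp [List.replicate_succ' (n := m + 1)]
    rwa [heq] at h2

lemma no_R_step (u v : List ABC) (hu : Lset u) : ¬ Step R12 u v := by
  rintro ⟨x, y, l, r, hr, hul, -⟩
  have hl : l = [a, b] ∧ r = [a] := by simpa [R12, Prod.ext_iff] using hr
  obtain ⟨rfl, rfl⟩ := hl
  rcases hu with rfl | ⟨n, hn, rfl⟩
  · have := congrArg List.length hul
    simp at this
    omega
  · have hm : ABC.a ∈ x ++ [ABC.a, ABC.b] ++ y := by simp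
    rw [← hul] at hm
    exact notmem_a n hm

lemma L_step (u v : List ABC) (hu : Lset u) (h : Step (R12 ∪ S12) u v) : Lset v := by
  obtain ⟨x, y, l, r, hr, rfl, rfl⟩ := h
  rcases rule_cases hr with ⟨rfl, rfl⟩ | ⟨rfl, rfl⟩
  · exact absurd (⟨x, y, [a, b], [a], rfl, rfl, rfl⟩ : Step R12 _ (x ++ [a] ++ y))
      (no_R_step _ _ hu)
  · rcases hu with h1 | ⟨n, hn, h1⟩
    · exfalso
      have hm : ABC.c ∈ x ++ [ABC.c] ++ y := by simp
      rw [h1] at hm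
      simp at hm
    · have h1' : x ++ ABC.c :: y = List.replicate n ABC.b ++ [ABC.c] := by
        simpa using h1
      obtain ⟨rfl, rfl⟩ := split_c x n y h1'
      exact Or.inr ⟨n + 1, by omega, by simp [List.replicate_succ']⟩

end Aux

open ABC in
/-- `R/S` is not terminating, yet `RFC(R∪S) = a ∪ b⁺c` contains no factor `ab`,
so `R/S` is terminating on `RFC(R∪S)`: relative termination is not in general
reducible to termination on right-hand sides of forward closures. -/
theorem rel_rfc_counterexample :
    ¬ SNRel R12 S12 ∧
    (∀ w : List ABC, RFC (R12 ∪ S12) w ↔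
      (w = [a] ∨ ∃ n : ℕ, 1 ≤ n ∧ w = List.replicate n b ++ [c])) ∧
    (∀ w : List ABC, RFC (R12 ∪ S12) w → ¬ ∃ x y : List ABC, w = x ++ [a, b] ++ y) ∧
    SNRelOn R12 S12 { w | RFC (R12 ∪ S12) w } := by
  refine ⟨?_, ?_, ?_, ?_⟩
  · intro h
    apply h
    refine ⟨fun n => if n % 2 = 0 then [a, b, c] else [a, c], Set.mem_univ _, ?_, ?_⟩
    · intro n
      by_cases h0 : n % 2 = 0
      · have h1 : ¬ (n + 1) % 2 = 0 := by omega
        simp only [if_pos h0, if_neg h1]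
        exact ⟨[], [c], [a, b], [a], Or.inl rfl, rfl, rfl⟩
      · have h1 : (n + 1) % 2 = 0 := by omega
        simp only [if_neg h0, if_pos h1]
        exact ⟨[a], [], [c], [b, c], Or.inr rfl, rfl, rfl⟩
    · intro N
      refine ⟨2 * N, by omega, ?_⟩
      have h0 : 2 * N % 2 = 0 := by omega
      have h1 : ¬ (2 * N + 1) % 2 = 0 := by omega
      simp only [if_pos h0, if_neg h1]
      exact ⟨[], [c], [a, b], [a], rfl, rfl, rfl⟩
  · intro w
    constructor
    · exact L_forward w
    · rintro (rfl | ⟨n, hn, rfl⟩)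
      · exact RFC.base (Or.inl rfl)
      · obtain ⟨m, rfl⟩ : ∃ m, n = m + 1 := ⟨n - 1, by omega⟩
        exact L_b m
  · rintro w hw ⟨x, y, heq⟩
    exact no_R_step w (x ++ [a] ++ y) (L_forward w hw)
      ⟨x, y, [a, b], [a], rfl, heq, rfl⟩
  · rintro ⟨f, hf0, hstep, hinf⟩
    have hL : ∀ n, Lset (f n) := by
      intro n
      induction n with
      | zero => exact L_forward _ hf0
      | succ m ih => exact L_step _ _ ih (hstep m)
    obtain ⟨n, -, hRn⟩ := hinf 0
    exact no_R_step _ _ (hL n) hRn
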